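/- Let V be an n-dimensional real vector space, let (F,G,H) be a transverse triple of complete flags in V with adapted bases (f_l), (g_l), (h_l), and let i,j,k ≥ 1 be integers with i+j+k = n; write A := A^{i,j,k}_{F,G,H}. For every real t, the family of subspaces (exp(tA)(G^(m)))_{0≤m≤n} is a complete flag, denoted exp(tA)·G, with adapted basis (exp(tA)g_1,…,exp(tA)g_n). For all integers i',j',k' ≥ 1 with i'+j'+k' = n, the six quantities in the defining formula of the triple ratio T_{i',j',k'}(F, exp(tA)·G, H), computed with these adapted bases, are nonzero, and T_{i',j',k'}(F, exp(tA)·G, H) = T_{i',j',k'}(F,G,H) if (i',j',k') ≠ (i,j,k), while T_{i,j,k}(F, exp(tA)·G, H) = e^t · T_{i,j,k}(F,G,H). -/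

import Mathlib

/-- `F` is a complete flag in an `n`-dimensional real vector space:
`F 0 ⊆ F 1 ⊆ ⋯ ⊆ F n` with `dim (F l) = l` for `0 ≤ l ≤ n`. -/
def IsFlag (n : ℕ) {V : Type*} [AddCommGroup V] [Module ℝ V]
    (F : ℕ → Submodule ℝ V) : Prop :=
  (∀ l, l < n → F l ≤ F (l + 1)) ∧ ∀ l, l ≤ n → Module.finrank ℝ (F l) = l

/-- A triple of flags is transverse if `F a + G b + H c = V` whenever `a + b + c = n`. -/
def TransverseTriple (n : ℕ) {V : Type*} [AddCommGroup V] [Module ℝ V]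
    (F G H : ℕ → Submodule ℝ V) : Prop :=
  ∀ a b c : ℕ, a + b + c = n → F a ⊔ G b ⊔ H c = ⊤

/-- A pair of flags is transverse if `F a + G (n - a) = V` for all `0 ≤ a ≤ n`. -/
def TransversePair (n : ℕ) {V : Type*} [AddCommGroup V] [Module ℝ V]
    (F G : ℕ → Submodule ℝ V) : Prop :=
  ∀ a, a ≤ n → F a ⊔ G (n - a) = ⊤

/-- `A` is the `(i,j,k)`-eruption endomorphism of the triple `(F,G,H)`: it acts as the
scalar `(n - i)/n` on `F i` and as the scalar `-i/n` on `G j + H k`. -/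
def IsEruption (n i j k : ℕ) {V : Type*} [AddCommGroup V] [Module ℝ V]
    (F G H : ℕ → Submodule ℝ V) (A : Module.End ℝ V) : Prop :=
  (∀ v ∈ F i, A v = (((n : ℝ) - (i : ℝ)) / (n : ℝ)) • v) ∧
  (∀ v ∈ G j ⊔ H k, A v = (-(i : ℝ) / (n : ℝ)) • v)

/-- `A` is the `(i, n-i)`-shearing endomorphism of the pair `(F,G)`: it acts as the
scalar `(n - i)/n` on `F i` and as the scalar `-i/n` on `G (n - i)`. -/
def IsShearing (n i : ℕ) {V : Type*} [AddCommGroup V] [Module ℝ V]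
    (F G : ℕ → Submodule ℝ V) (A : Module.End ℝ V) : Prop :=
  (∀ v ∈ F i, A v = (((n : ℝ) - (i : ℝ)) / (n : ℝ)) • v) ∧
  (∀ v ∈ G (n - i), A v = (-(i : ℝ) / (n : ℝ)) • v)

/-- `f` (whose values `f 0, …, f (n-1)` matter) is a basis adapted to the flag `F`:
`F l` is the span of `f 0, …, f (l-1)` for all `0 ≤ l ≤ n`. -/
def Adapted (n : ℕ) {V : Type*} [AddCommGroup V] [Module ℝ V]
    (F : ℕ → Submodule ℝ V) (f : ℕ → V) : Prop :=
  ∀ l, l ≤ n → F l = Submodule.span ℝ (f '' Set.Iio l)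

/-- `F^(a) ∧ G^(b) ∧ H^(c) := ω (f 0, …, f (a-1), g 0, …, g (b-1), h 0, …, h (c-1))`,
for `a + b + c = n`. -/
noncomputable def wedge (n : ℕ) {V : Type*} [AddCommGroup V] [Module ℝ V]
    (ω : AlternatingMap ℝ V ℝ (Fin n)) (f g h : ℕ → V) (a b c : ℕ) : ℝ :=
  ω fun l : Fin n =>
    if (l : ℕ) < a then f (l : ℕ)
    else if (l : ℕ) < a + b then g ((l : ℕ) - a)
    else h ((l : ℕ) - a - b)

/-- The triple ratio `T_{i,j,k}(F,G,H)` computed with adapted bases `f, g, h` of the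
flags `F, G, H` and the nonzero alternating `n`-form `ω`. -/
noncomputable def tripleRatio (n : ℕ) {V : Type*} [AddCommGroup V] [Module ℝ V]
    (ω : AlternatingMap ℝ V ℝ (Fin n)) (f g h : ℕ → V) (i j k : ℕ) : ℝ :=
  (wedge n ω f g h (i + 1) j (k - 1) / wedge n ω f g h (i + 1) (j - 1) k) *
  (wedge n ω f g h (i - 1) (j + 1) k / wedge n ω f g h i (j + 1) (k - 1)) *
  (wedge n ω f g h i (j - 1) (k + 1) / wedge n ω f g h (i - 1) j (k + 1))

/-- The exponential of an endomorphism of a finite-dimensional real vector space. -/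
noncomputable def expEnd {V : Type*} [NormedAddCommGroup V] [NormedSpace ℝ V]
    [FiniteDimensional ℝ V] (A : Module.End ℝ V) : Module.End ℝ V :=
  (NormedSpace.exp (LinearMap.toContinuousLinearMap A)).toLinearMap

lemma expEnd_eigen {V : Type*} [NormedAddCommGroup V] [NormedSpace ℝ V]
    [FiniteDimensional ℝ V] (A : Module.End ℝ V) (c : ℝ) (v : V) (h : A v = c • v) :
    expEnd A v = Real.exp c • v := by
  have hB : ∀ m : ℕ, ((LinearMap.toContinuousLinearMap A) ^ m) v = c ^ m • v := by
    intro m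
    induction m with
    | zero => simp
    | succ m ih =>
        rw [pow_succ, ContinuousLinearMap.mul_apply,
          show (LinearMap.toContinuousLinearMap A) v = c • v from h, map_smul, ih,
          smul_smul, pow_succ, mul_comm c]
  have hsum := NormedSpace.expSeries_summable' (𝕂 := ℝ) (LinearMap.toContinuousLinearMap A)
  have : expEnd A v = ∑' m : ℕ, ((m.factorial :ℝ)⁻¹ • (LinearMap.toContinuousLinearMap A) ^ m) v := by
    show (NormedSpace.exp (LinearMap.toContinuousLinearMap A)) v = _
    rw [NormedSpace.exp_eq_tsum (𝕂 := ℝ)]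
    exact ((ContinuousLinearMap.apply ℝ V v).map_tsum hsum)
  rw [this]
  have : ∀ m : ℕ, ((m.factorial :ℝ)⁻¹ • (LinearMap.toContinuousLinearMap A) ^ m) v
      = ((m.factorial :ℝ)⁻¹ * c ^ m) • v := by
    intro m; rw [ContinuousLinearMap.smul_apply, hB, smul_smul]
  rw [tsum_congr this, Summable.tsum_smul_const]
  · congr 1
    rw [Real.exp_eq_exp_ℝ, NormedSpace.exp_eq_tsum (𝕂 := ℝ)]
    simp [smul_eq_mul]
  · have := NormedSpace.expSeries_summable' (𝕂 := ℝ) c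
    simpa [smul_eq_mul] using this


lemma alt_zero_of_mem_span {n : ℕ} {V : Type*} [AddCommGroup V] [Module ℝ V]
    (ω : AlternatingMap ℝ V ℝ (Fin n)) (v : Fin n → V) (l₀ : Fin n)
    (hl : v l₀ ∈ Submodule.span ℝ (v '' {l | l ≠ l₀})) : ω v = 0 := by
  apply ω.map_linearDependent
  intro hLI
  exact hLI.notMem_span_image (s := {l | l ≠ l₀}) (by simp) hl

lemma alt_map_smul_univ {n : ℕ} {V : Type*} [AddCommGroup V] [Module ℝ V]
    (ω : AlternatingMap ℝ V ℝ (Fin n)) (c : Fin n → ℝ) (m : Fin n → V) :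
    ω (fun l => c l • m l) = (∏ l, c l) • ω m :=
  (ω : MultilinearMap ℝ (fun _ : Fin n => V) ℝ).map_smul_univ c m

lemma alt_scale {n : ℕ} {V : Type*} [AddCommGroup V] [Module ℝ V]
    (ω : AlternatingMap ℝ V ℝ (Fin n)) (u : Fin n → V) (c : Fin n → ℝ)
    (P : Set (Fin n))
    (S : Finset (Fin n)) (u' : Fin n → V)
    (hoff : ∀ l ∉ S, u' l = c l • u l)
    (hS : ∀ l ∈ S, u' l - c l • u l ∈ Submodule.span ℝ (u' '' P))
    (hSP : ∀ l ∈ S, l ∉ P) :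
    ω u' = (∏ l, c l) • ω u := by
  classical
  induction S using Finset.induction generalizing u' with
  | empty =>
      have : u' = fun l => c l • u l := funext fun l => hoff l (by simp)
      rw [this]
      exact (ω : MultilinearMap ℝ (fun _ : Fin n => V) ℝ).map_smul_univ c u
  | @insert l₀ S hnotmem ih =>
      have hl₀ : l₀ ∈ insert l₀ S := Finset.mem_insert_self _ _
      have hl₀P : l₀ ∉ P := hSP l₀ hl₀
      set w : V := u' l₀ - c l₀ • u l₀ with hw
      set u'' : Fin n → V := Function.update u' l₀ (c l₀ • u l₀) with hu''
      have hPu : ∀ l ∈ P, u'' l = u' l := fun l hlP => by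
        have : l ≠ l₀ := fun he => hl₀P (he ▸ hlP)
        simp [hu'', Function.update_of_ne this]
      have himg : u'' '' P = u' '' P := Set.image_congr hPu
      have h1 : ω u' = ω u'' + ω (Function.update u' l₀ w) := by
        have := (ω : MultilinearMap ℝ (fun _ : Fin n => V) ℝ).map_update_add u' l₀
          (c l₀ • u l₀) w
        simp only [hw, add_sub_cancel] at this
        rw [show Function.update u' l₀ (u' l₀) = u' from Function.update_eq_self _ _] at this
        exact this
      have h2 : ω (Function.update u' l₀ w) = 0 := by
        apply alt_zero_of_mem_span _ _ l₀
        rw [Function.update_self]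
        have hsub : u' '' P ⊆ (Function.update u' l₀ w) '' {l | l ≠ l₀} := by
          rintro x ⟨l, hlP, rfl⟩
          have hne : l ≠ l₀ := fun he => hl₀P (he ▸ hlP)
          exact ⟨l, hne, by rw [Function.update_of_ne hne]⟩
        exact Submodule.span_mono hsub (hS l₀ hl₀)
      rw [h1, h2, add_zero]
      apply ih
      · intro l hl
        by_cases he : l = l₀
        · subst he; simp [hu'']
        · rw [hu'', Function.update_of_ne he]
          exact hoff l (by simp [he, hl])
      · intro l hl
        have hne : l ≠ l₀ := fun he => hnotmem (he ▸ hl)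
        rw [hu'', Function.update_of_ne hne, himg]
        exact hS l (Finset.mem_insert_of_mem hl)
      · exact fun l hl => hSP l (Finset.mem_insert_of_mem hl)


section Aux

variable {V : Type*} [AddCommGroup V] [Module ℝ V]

open Finset in
lemma prod_three_block (n a b c : ℕ) (h : a + b + c = n) (x y z : ℝ) :
    (∏ l : Fin n, (if (l:ℕ) < a then x else if (l:ℕ) < a + b then y else z))
      = x ^ a * y ^ b * z ^ c := by
  rw [Fin.prod_univ_eq_prod_range (fun l => if l < a then x else if l < a + b then y else z) n]
  rw [← Nat.Ico_zero_eq_range,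
    ← Finset.prod_Ico_consecutive _ (Nat.zero_le a) (by omega : a ≤ n),
    ← Finset.prod_Ico_consecutive _ (by omega : a ≤ a + b) (by omega : a + b ≤ n)]
  have h1 : ∏ l ∈ Finset.Ico 0 a, (if l < a then x else if l < a + b then y else z) = x ^ a := by
    rw [Finset.prod_eq_pow_card (b := x) (fun l hl => by simp only [Finset.mem_Ico] at hl; simp [hl.2]),
      Nat.card_Ico]
    simp
  have h2 : ∏ l ∈ Finset.Ico a (a + b), (if l < a then x else if l < a + b then y else z) = y ^ b := by
    rw [Finset.prod_eq_pow_card (b := y) (fun l hl => by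
      simp only [Finset.mem_Ico] at hl
      have h4 : ¬ l < a := by omega
      simp [h4, hl.2]), Nat.card_Ico]
    simp
  have h3 : ∏ l ∈ Finset.Ico (a + b) n, (if l < a then x else if l < a + b then y else z) = z ^ c := by
    rw [Finset.prod_eq_pow_card (b := z) (fun l hl => by
      simp only [Finset.mem_Ico] at hl
      have h4 : ¬ l < a := by omega
      have h5 : ¬ l < a + b := by omega
      simp [h4, h5]), Nat.card_Ico]
    congr 1
    omega
  rw [h1, h2, h3, mul_assoc]

open Finset in
lemma prod_block_fun (n a b c : ℕ) (h : a + b + c = n) (β : ℕ → ℝ) :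
    (∏ l : Fin n, (if (l:ℕ) < a then (1:ℝ) else if (l:ℕ) < a + b then β ((l:ℕ) - a) else 1))
      = ∏ m ∈ Finset.range b, β m := by
  rw [Fin.prod_univ_eq_prod_range (fun l => if l < a then (1:ℝ) else if l < a + b then β (l - a) else 1) n]
  rw [← Nat.Ico_zero_eq_range,
    ← Finset.prod_Ico_consecutive _ (Nat.zero_le a) (by omega : a ≤ n),
    ← Finset.prod_Ico_consecutive _ (by omega : a ≤ a + b) (by omega : a + b ≤ n)]
  have h1 : ∏ l ∈ Finset.Ico 0 a, (if l < a then (1:ℝ) else if l < a + b then β (l - a) else 1) = 1 :=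
    Finset.prod_eq_one fun l hl => by simp only [Finset.mem_Ico] at hl; simp [hl.2]
  have h3 : ∏ l ∈ Finset.Ico (a+b) n, (if l < a then (1:ℝ) else if l < a + b then β (l - a) else 1) = 1 :=
    Finset.prod_eq_one fun l hl => by
      simp only [Finset.mem_Ico] at hl
      have h4 : ¬ l < a := by omega
      have h5 : ¬ l < a + b := by omega
      simp [h4, h5]
  rw [h1, h3, one_mul, mul_one]
  have h2 : (∏ l ∈ Finset.Ico a (a+b), (if l < a then (1:ℝ) else if l < a + b then β (l - a) else 1))
      = ∏ l ∈ Finset.Ico a (a+b), β (l - a) :=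
    Finset.prod_congr rfl fun l hl => by
      simp only [Finset.mem_Ico] at hl
      have : ¬ l < a := by omega
      simp [this, hl.2]
  rw [h2, Finset.prod_Ico_eq_prod_range]
  have hab : a + b - a = b := by omega
  rw [hab]
  exact Finset.prod_congr rfl fun m _ => by congr 1; omega

open Finset in
lemma prod_range_split (b j : ℕ) (hj : j ≤ b) (x y : ℝ) :
    (∏ m ∈ Finset.range b, (if m < j then x else y)) = x ^ j * y ^ (b - j) := by
  rw [← Nat.Ico_zero_eq_range, ← Finset.prod_Ico_consecutive _ (Nat.zero_le j) hj]
  have h1 : ∏ m ∈ Finset.Ico 0 j, (if m < j then x else y) = x ^ j := by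
    rw [Finset.prod_eq_pow_card (b := x) (fun m hm => by simp only [Finset.mem_Ico] at hm; simp [hm.2]),
      Nat.card_Ico]
    simp
  have h2 : ∏ m ∈ Finset.Ico j b, (if m < j then x else y) = y ^ (b - j) := by
    rw [Finset.prod_eq_pow_card (b := y) (fun m hm => by
      simp only [Finset.mem_Ico] at hm
      have : ¬ m < j := by omega
      simp [this]), Nat.card_Ico]
  rw [h1, h2]

lemma fam_range (n a b c : ℕ) (hn : a + b + c = n) (f g h : ℕ → V) :
    Set.range (fun l : Fin n => if (l:ℕ) < a then f (l:ℕ)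
        else if (l:ℕ) < a + b then g ((l:ℕ) - a) else h ((l:ℕ) - a - b))
      = f '' Set.Iio a ∪ g '' Set.Iio b ∪ h '' Set.Iio c := by
  ext x
  constructor
  · rintro ⟨l, rfl⟩
    by_cases h1 : (l:ℕ) < a
    · exact Or.inl (Or.inl ⟨l, h1, by simp [h1]⟩)
    · by_cases h2 : (l:ℕ) < a + b
      · exact Or.inl (Or.inr ⟨(l:ℕ) - a, by simp only [Set.mem_Iio]; omega, by simp [h1, h2]⟩)
      · refine Or.inr ⟨(l:ℕ) - a - b, ?_, by simp [h1, h2]⟩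
        have := l.isLt
        simp only [Set.mem_Iio]
        omega
  · rintro ((⟨m, hm, rfl⟩ | ⟨m, hm, rfl⟩) | ⟨m, hm, rfl⟩) <;> simp only [Set.mem_Iio] at hm
    · exact ⟨⟨m, by omega⟩, by simp [hm]⟩
    · refine ⟨⟨a + m, by omega⟩, ?_⟩
      have h1 : ¬ (a + m < a) := by omega
      have h2 : a + m < a + b := by omega
      simp [h1, h2]
    · refine ⟨⟨a + b + m, by omega⟩, ?_⟩
      have h1 : ¬ (a + b + m < a) := by omega
      have h2 : ¬ (a + b + m < a + b) := by omega
      have h3 : a + b + m - a - b = m := by omega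
      simp [h1, h2, h3]

end Aux

section Aux2

variable {n : ℕ} {V : Type*} [AddCommGroup V] [Module ℝ V]

lemma flag_mono {F : ℕ → Submodule ℝ V} (hF : IsFlag n F) {a b : ℕ} (hab : a ≤ b) (hb : b ≤ n) :
    F a ≤ F b := by
  induction b with
  | zero => simpa [Nat.le_zero.mp hab]
  | succ m ih =>
      rcases Nat.lt_or_ge a (m+1) with hlt | hge
      · exact le_trans (ih (by omega) (by omega)) (hF.1 m (by omega))
      · have : a = m + 1 := by omega
        simp [this]

lemma adapted_mem {F : ℕ → Submodule ℝ V} {f : ℕ → V} (hf : Adapted n F f) {l a : ℕ}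
    (hl : l < a) (ha : a ≤ n) : f l ∈ F a := by
  rw [hf a ha]
  exact Submodule.subset_span ⟨l, hl, rfl⟩

lemma wedge_ne_zero [Module.Finite ℝ V] (hV : Module.finrank ℝ V = n)
    (ω : AlternatingMap ℝ V ℝ (Fin n)) (hω : ω ≠ 0) (f g h : ℕ → V) (a b c : ℕ)
    (habc : a + b + c = n)
    (htop : Submodule.span ℝ (f '' Set.Iio a) ⊔ Submodule.span ℝ (g '' Set.Iio b)
      ⊔ Submodule.span ℝ (h '' Set.Iio c) = ⊤) :
    wedge n ω f g h a b c ≠ 0 := by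
  classical
  set u : Fin n → V := fun l : Fin n => if (l : ℕ) < a then f (l : ℕ)
    else if (l : ℕ) < a + b then g ((l : ℕ) - a) else h ((l : ℕ) - a - b) with hu
  have hspan : ⊤ ≤ Submodule.span ℝ (Set.range u) := by
    rw [hu, fam_range n a b c habc f g h, Set.union_assoc, Submodule.span_union,
      Submodule.span_union, ← sup_assoc, htop]
  have hcard : Fintype.card (Fin n) = Module.finrank ℝ V := by simp [hV]
  set Bas := basisOfTopLeSpanOfCardEqFinrank u hspan hcard with hBas
  intro h0
  apply hω
  have he := ω.eq_smul_basis_det Bas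
  rw [show ⇑Bas = u from coe_basisOfTopLeSpanOfCardEqFinrank u hspan hcard] at he
  rw [show ω u = 0 from h0, zero_smul] at he
  exact he

end Aux2

lemma ratio_scale (x1 x3 x5 x2 x4 x6 w1 w3 w5 w2 w4 w6 X : ℝ)
    (hx : x1 * x3 * x5 = X * (x2 * x4 * x6))
    (h2 : x2 ≠ 0) (h4 : x4 ≠ 0) (h6 : x6 ≠ 0)
    (hw2 : w2 ≠ 0) (hw4 : w4 ≠ 0) (hw6 : w6 ≠ 0) :
    (x1 * w1 / (x2 * w2)) * (x3 * w3 / (x4 * w4)) * (x5 * w5 / (x6 * w6))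
      = X * ((w1 / w2) * (w3 / w4) * (w5 / w6)) := by
  field_simp
  linear_combination w1 * w3 * w5 * hx

set_option maxHeartbeats 1000000 in
theorem statement3 (n : ℕ) (V : Type*) [NormedAddCommGroup V] [NormedSpace ℝ V]
    [FiniteDimensional ℝ V] (hV : Module.finrank ℝ V = n)
    (F G H : ℕ → Submodule ℝ V) (hF : IsFlag n F) (hG : IsFlag n G) (hH : IsFlag n H)
    (hFGH : TransverseTriple n F G H)
    (ω : AlternatingMap ℝ V ℝ (Fin n)) (hω : ω ≠ 0)
    (f g h : ℕ → V) (hf : Adapted n F f) (hg : Adapted n G g) (hh : Adapted n H h)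
    (i j k : ℕ) (hi : 1 ≤ i) (hj : 1 ≤ j) (hk : 1 ≤ k) (hijk : i + j + k = n)
    (A : Module.End ℝ V) (hA : IsEruption n i j k F G H A) (t : ℝ) :
    IsFlag n (fun m => Submodule.map (expEnd (t • A)) (G m)) ∧
    Adapted n (fun m => Submodule.map (expEnd (t • A)) (G m)) (fun l => expEnd (t • A) (g l)) ∧
    ∀ i' j' k' : ℕ, 1 ≤ i' → 1 ≤ j' → 1 ≤ k' → i' + j' + k' = n →
      (wedge n ω f (fun l => expEnd (t • A) (g l)) h (i' + 1) j' (k' - 1) ≠ 0 ∧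
       wedge n ω f (fun l => expEnd (t • A) (g l)) h (i' + 1) (j' - 1) k' ≠ 0 ∧
       wedge n ω f (fun l => expEnd (t • A) (g l)) h (i' - 1) (j' + 1) k' ≠ 0 ∧
       wedge n ω f (fun l => expEnd (t • A) (g l)) h i' (j' + 1) (k' - 1) ≠ 0 ∧
       wedge n ω f (fun l => expEnd (t • A) (g l)) h i' (j' - 1) (k' + 1) ≠ 0 ∧
       wedge n ω f (fun l => expEnd (t • A) (g l)) h (i' - 1) j' (k' + 1) ≠ 0) ∧
      ((i', j', k') ≠ (i, j, k) →
        tripleRatio n ω f (fun l => expEnd (t • A) (g l)) h i' j' k' = tripleRatio n ω f g h i' j' k') ∧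
      ((i', j', k') = (i, j, k) →
        tripleRatio n ω f (fun l => expEnd (t • A) (g l)) h i' j' k' = Real.exp t * tripleRatio n ω f g h i' j' k') := by
  classical
  have hn0 : 0 < n := by omega
  have hnR : (n:ℝ) ≠ 0 := Nat.cast_ne_zero.mpr (by omega)
  set s : ℝ := Real.exp t with hs
  set N : ℝ := Real.exp (t * (-(i:ℝ) / (n:ℝ))) with hNdef
  have hsne : s ≠ 0 := Real.exp_ne_zero t
  have hNne : N ≠ 0 := Real.exp_ne_zero _
  have hsNne : s * N ≠ 0 := mul_ne_zero hsne hNne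
  set E : Module.End ℝ V := expEnd (t • A) with hE
  -- eigenvalue facts
  have hEU : ∀ v ∈ F i, E v = (s * N) • v := by
    intro v hv
    have h1 : (t • A) v = (t * (((n:ℝ) - (i:ℝ)) / (n:ℝ))) • v := by
      rw [LinearMap.smul_apply, hA.1 v hv, smul_smul]
    rw [hE, expEnd_eigen (t • A) _ v h1]
    congr 1
    rw [hs, hNdef, ← Real.exp_add]
    congr 1
    field_simp
    ring
  have hEW : ∀ v ∈ G j ⊔ H k, E v = N • v := by
    intro v hv
    have h1 : (t • A) v = (t * (-(i:ℝ) / (n:ℝ))) • v := by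
      rw [LinearMap.smul_apply, hA.2 v hv, smul_smul]
    rw [hE, expEnd_eigen (t • A) _ v h1]
  -- direct sum decomposition
  have hUW : F i ⊔ (G j ⊔ H k) = ⊤ := by
    rw [← sup_assoc]; exact hFGH i j k hijk
  have hfU : Module.finrank ℝ (F i) = i := hF.2 i (by omega)
  have hWle : Module.finrank ℝ (G j ⊔ H k : Submodule ℝ V) ≤ j + k := by
    have h1 := Submodule.finrank_sup_add_finrank_inf_eq (G j) (H k)
    rw [hG.2 j (by omega), hH.2 k (by omega)] at h1
    omega
  have hUWbot : F i ⊓ (G j ⊔ H k) = ⊥ := by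
    have h2 := Submodule.finrank_sup_add_finrank_inf_eq (F i) (G j ⊔ H k)
    rw [hUW, hfU, finrank_top] at h2
    rw [hV] at h2
    have h3 : Module.finrank ℝ (F i ⊓ (G j ⊔ H k) : Submodule ℝ V) = 0 := by omega
    exact Submodule.finrank_eq_zero.mp h3
  have hdecomp : ∀ v : V, ∃ p q : V, p ∈ F i ∧ q ∈ G j ⊔ H k ∧ v = p + q := by
    intro v
    have hv : v ∈ F i ⊔ (G j ⊔ H k) := by rw [hUW]; exact Submodule.mem_top
    obtain ⟨p, hp, q, hq, hpq⟩ := Submodule.mem_sup.mp hv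
    exact ⟨p, q, hp, hq, hpq.symm⟩
  have hcorrU : ∀ v : V, E v - N • v ∈ F i := by
    intro v
    obtain ⟨p, q, hp, hq, rfl⟩ := hdecomp v
    have h1 : E (p + q) = (s*N) • p + N • q := by rw [map_add, hEU p hp, hEW q hq]
    have h2 : E (p + q) - N • (p + q) = (s*N - N) • p := by rw [h1]; module
    rw [h2]; exact (F i).smul_mem _ hp
  have hcorrW : ∀ v : V, E v - (s * N) • v ∈ G j ⊔ H k := by
    intro v
    obtain ⟨p, q, hp, hq, rfl⟩ := hdecomp v
    have h1 : E (p + q) = (s*N) • p + N • q := by rw [map_add, hEU p hp, hEW q hq]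
    have h2 : E (p + q) - (s*N) • (p + q) = (N - s*N) • q := by rw [h1]; module
    rw [h2]; exact (G j ⊔ H k).smul_mem _ hq
  -- injectivity
  have hEinj : Function.Injective E := by
    rw [← LinearMap.ker_eq_bot, LinearMap.ker_eq_bot']
    intro v hv
    obtain ⟨p, q, hp, hq, rfl⟩ := hdecomp v
    rw [map_add, hEU p hp, hEW q hq] at hv
    have hmem : (s*N) • p ∈ F i ⊓ (G j ⊔ H k) := by
      refine ⟨(F i).smul_mem _ hp, ?_⟩
      have h1 : (s*N) • p = - (N • q) := by linear_combination (norm := module) hv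
      rw [h1]
      exact (G j ⊔ H k).neg_mem ((G j ⊔ H k).smul_mem _ hq)
    rw [hUWbot, Submodule.mem_bot] at hmem
    have hp0 : p = 0 := by
      rcases smul_eq_zero.mp hmem with h | h
      · exact absurd h hsNne
      · exact h
    rw [hp0, smul_zero, zero_add] at hv
    have hq0 : q = 0 := by
      rcases smul_eq_zero.mp hv with h | h
      · exact absurd h hNne
      · exact h
    rw [hp0, hq0, add_zero]
  -- flag and adapted
  have hmapAdapted : ∀ m ≤ n, Submodule.map E (G m)
      = Submodule.span ℝ ((fun l => E (g l)) '' Set.Iio m) := by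
    intro m hm
    rw [hg m hm, Submodule.map_span, ← Set.image_comp]
    rfl
  refine ⟨⟨fun l hl => Submodule.map_mono (hG.1 l hl), fun l hl => ?_⟩,
    fun m hm => hmapAdapted m hm, ?_⟩
  · show Module.finrank ℝ (Submodule.map E (G l)) = l
    rw [(Submodule.equivMapOfInjective E hEinj (G l)).symm.finrank_eq]
    exact hG.2 l hl
  -- nonvanishing of old wedges
  have oldne : ∀ a b c : ℕ, a + b + c = n → wedge n ω f g h a b c ≠ 0 := by
    intro a b c habc
    refine wedge_ne_zero hV ω hω f g h a b c habc ?_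
    rw [← hf a (by omega), ← hg b (by omega), ← hh c (by omega)]
    exact hFGH a b c habc
  -- reference basis and the determinant-type fact
  have hρ : ∀ v : Fin n → V, ω (fun l => E (v l)) = (s ^ i * N ^ n) * ω v := by
    set e0 : Fin n → V := fun l : Fin n => if (l:ℕ) < i then f (l:ℕ)
      else if (l:ℕ) < i + j then g ((l:ℕ) - i) else h ((l:ℕ) - i - j) with he0
    have hspan0 : ⊤ ≤ Submodule.span ℝ (Set.range e0) := by
      rw [he0, fam_range n i j k hijk f g h, Set.union_assoc, Submodule.span_union,
        Submodule.span_union, ← sup_assoc, ← hf i (by omega), ← hg j (by omega),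
        ← hh k (by omega)]
      rw [hFGH i j k hijk]
    have hcard : Fintype.card (Fin n) = Module.finrank ℝ V := by simp [hV]
    set Bas0 := basisOfTopLeSpanOfCardEqFinrank e0 hspan0 hcard with hBas0
    have hcoe : ⇑Bas0 = e0 := coe_basisOfTopLeSpanOfCardEqFinrank e0 hspan0 hcard
    have he0ne : ω e0 ≠ 0 := oldne i j k hijk
    have hEe0 : (fun l => E (e0 l)) = fun l : Fin n =>
        (if (l:ℕ) < i then s * N else if (l:ℕ) < i + j then N else N) • e0 l := by
      funext l
      by_cases h1 : (l:ℕ) < i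
      · simp only [he0]
        rw [if_pos h1, if_pos h1]
        exact hEU _ (adapted_mem hf h1 (by omega))
      · by_cases h2 : (l:ℕ) < i + j
        · simp only [he0]
          rw [if_neg h1, if_neg h1, if_pos h2, if_pos h2]
          refine hEW _ (Submodule.mem_sup_left (adapted_mem hg ?_ (by omega)))
          omega
        · simp only [he0]
          rw [if_neg h1, if_neg h1, if_neg h2, if_neg h2]
          refine hEW _ (Submodule.mem_sup_right (adapted_mem hh ?_ (by omega)))
          have := l.isLt
          omega
    have hval : ω (fun l => E (e0 l)) = (s ^ i * N ^ n) * ω e0 := by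
      have hms : ω (fun l : Fin n => (if (l:ℕ) < i then s * N else if (l:ℕ) < i + j then N else N) • e0 l)
          = (∏ l : Fin n, (if (l:ℕ) < i then s * N else if (l:ℕ) < i + j then N else N)) • ω e0 :=
        alt_map_smul_univ ω _ e0
      rw [hEe0, hms, prod_three_block n i j k hijk (s*N) N N]
      have : (s*N)^i * N^j * N^k = s^i * N^n := by
        rw [mul_pow, ← hijk, pow_add, pow_add]
        ring
      rw [this, smul_eq_mul]
    have hcomp : ω.compLinearMap (E : V →ₗ[ℝ] V) = (s ^ i * N ^ n) • ω := by
      have h1 := (ω.compLinearMap (E : V →ₗ[ℝ] V)).eq_smul_basis_det Bas0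
      have h2 := ω.eq_smul_basis_det Bas0
      rw [hcoe] at h1 h2
      have h3 : (ω.compLinearMap (E : V →ₗ[ℝ] V)) e0 = (s ^ i * N ^ n) * ω e0 := by
        rw [ω.compLinearMap_apply]
        exact hval
      rw [h3] at h1
      rw [h1, mul_smul, ← h2]
    intro v
    calc ω (fun l => E (v l)) = (ω.compLinearMap (E : V →ₗ[ℝ] V)) v := by
          rw [ω.compLinearMap_apply]
      _ = ((s ^ i * N ^ n) • ω) v := by rw [hcomp]
      _ = (s ^ i * N ^ n) * ω v := rfl
  -- THE KEY WEDGE FORMULA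
  have key : ∀ a b c : ℕ, a + b + c = n →
      wedge n ω f (fun l => E (g l)) h a b c
        = N ^ b * s ^ (min (i - a) (b - j)) * wedge n ω f g h a b c := by
    intro a b c habc
    set u : Fin n → V := fun l : Fin n => if (l:ℕ) < a then f (l:ℕ)
      else if (l:ℕ) < a + b then g ((l:ℕ) - a) else h ((l:ℕ) - a - b) with hu
    set u' : Fin n → V := fun l : Fin n => if (l:ℕ) < a then f (l:ℕ)
      else if (l:ℕ) < a + b then E (g ((l:ℕ) - a)) else h ((l:ℕ) - a - b) with hu'
    have hwnew : wedge n ω f (fun l => E (g l)) h a b c = ω u' := rfl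
    have hwold : wedge n ω f g h a b c = ω u := rfl
    rw [hwnew, hwold]
    have hgW : ∀ m, m < j → g m ∈ G j ⊔ H k :=
      fun m hm => Submodule.mem_sup_left (adapted_mem hg hm (by omega))
    by_cases hb : b ≤ j
    · -- case B : all g-vectors eigen with eigenvalue N
      have hmin : min (i - a) (b - j) = 0 := by omega
      rw [hmin, pow_zero, mul_one]
      have hres := alt_scale ω u
        (fun l : Fin n => if (l:ℕ) < a then (1:ℝ) else if (l:ℕ) < a + b then N else 1)
        ∅ ∅ u'
        (by
          intro l _
          by_cases h1 : (l:ℕ) < a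
          · simp [hu', hu, h1]
          · by_cases h2 : (l:ℕ) < a + b
            · simp only [hu', hu]
              rw [if_neg h1, if_neg h1, if_neg h1, if_pos h2, if_pos h2, if_pos h2]
              exact hEW _ (hgW _ (by omega))
            · simp [hu', hu, h1, h2])
        (by simp) (by simp)
      rw [hres, prod_three_block n a b c habc 1 N 1, smul_eq_mul]
      ring
    · by_cases ha : i ≤ a
      · -- case A : corrections lie in F i ⊆ span of the f-block
        have hmin : min (i - a) (b - j) = 0 := by omega
        rw [hmin, pow_zero, mul_one]
        have himg : Submodule.span ℝ (u' '' {l : Fin n | (l:ℕ) < i}) = F i := by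
          have himgeq : u' '' {l : Fin n | (l:ℕ) < i} = f '' Set.Iio i := by
            ext x
            constructor
            · rintro ⟨l, hl, rfl⟩
              simp only [Set.mem_setOf_eq] at hl
              exact ⟨(l:ℕ), hl, by simp [hu', show (l:ℕ) < a by omega]⟩
            · rintro ⟨m, hm, rfl⟩
              simp only [Set.mem_Iio] at hm
              refine ⟨⟨m, by omega⟩, by simpa using hm, ?_⟩
              simp [hu', show m < a by omega]
          rw [himgeq, ← hf i (by omega)]
        have hres := alt_scale ω u
          (fun l : Fin n => if (l:ℕ) < a then (1:ℝ) else if (l:ℕ) < a + b then N else 1)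
          {l : Fin n | (l:ℕ) < i}
          (Finset.univ.filter (fun l : Fin n => a + j ≤ (l:ℕ) ∧ (l:ℕ) < a + b)) u'
          (by
            intro l hl
            simp only [Finset.mem_filter, Finset.mem_univ, true_and, not_and, not_lt] at hl
            by_cases h1 : (l:ℕ) < a
            · simp [hu', hu, h1]
            · by_cases h2 : (l:ℕ) < a + b
              · simp only [hu', hu]
                rw [if_neg h1, if_neg h1, if_neg h1, if_pos h2, if_pos h2, if_pos h2]
                exact hEW _ (hgW _ (by omega))
              · simp [hu', hu, h1, h2])
          (by
            intro l hl
            simp only [Finset.mem_filter, Finset.mem_univ, true_and] at hl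
            have h1 : ¬ (l:ℕ) < a := by omega
            have h2 : (l:ℕ) < a + b := hl.2
            rw [himg]
            simp only [hu', hu]
            rw [if_neg h1, if_neg h1, if_neg h1, if_pos h2, if_pos h2, if_pos h2]
            exact hcorrU _)
          (by
            intro l hl
            simp only [Finset.mem_filter, Finset.mem_univ, true_and] at hl
            simp only [Set.mem_setOf_eq, not_lt]
            omega)
        rw [hres, prod_three_block n a b c habc 1 N 1, smul_eq_mul]
        ring
      · by_cases hc : k ≤ c
        · -- case D : corrections lie in G j ⊔ H k ⊆ span of low g-block and h-block
          have hmin : min (i - a) (b - j) = b - j := by omega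
          have hPspan : (G j ⊔ H k : Submodule ℝ V) ≤ Submodule.span ℝ
              (u' '' {l : Fin n | (a ≤ (l:ℕ) ∧ (l:ℕ) < a + j) ∨ (a + b ≤ (l:ℕ) ∧ (l:ℕ) < a + b + k)}) := by
            refine sup_le ?_ ?_
            · rw [hg j (by omega), Submodule.span_le]
              rintro x ⟨m, hm, rfl⟩
              simp only [Set.mem_Iio] at hm
              have hidx : a + m < n := by omega
              have hval : u' ⟨a + m, hidx⟩ = N • g m := by
                have hrfl : u' ⟨a + m, hidx⟩ = if a + m < a then f (a + m)
                    else if a + m < a + b then E (g (a + m - a)) else h (a + m - a - b) := rfl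
                rw [hrfl, if_neg (by omega), if_pos (by omega), show a + m - a = m by omega]
                exact hEW _ (hgW _ hm)
              have hmem : u' ⟨a + m, hidx⟩ ∈ Submodule.span ℝ
                  (u' '' {l : Fin n | (a ≤ (l:ℕ) ∧ (l:ℕ) < a + j) ∨ (a + b ≤ (l:ℕ) ∧ (l:ℕ) < a + b + k)}) :=
                Submodule.subset_span ⟨⟨a + m, hidx⟩,
                  Or.inl ⟨(by omega : a ≤ a + m), (by omega : a + m < a + j)⟩, rfl⟩
              have : g m = N⁻¹ • u' ⟨a + m, hidx⟩ := by
                rw [hval, smul_smul, inv_mul_cancel₀ hNne, one_smul]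
              rw [this]
              exact Submodule.smul_mem _ _ hmem
            · rw [hh k (by omega), Submodule.span_le]
              rintro x ⟨m, hm, rfl⟩
              simp only [Set.mem_Iio] at hm
              have hidx : a + b + m < n := by omega
              have hval : u' ⟨a + b + m, hidx⟩ = h m := by
                have hrfl : u' ⟨a + b + m, hidx⟩ = if a + b + m < a then f (a + b + m)
                    else if a + b + m < a + b then E (g (a + b + m - a)) else h (a + b + m - a - b) := rfl
                rw [hrfl, if_neg (by omega), if_neg (by omega), show a + b + m - a - b = m by omega]
              exact Submodule.subset_span ⟨⟨a + b + m, hidx⟩,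
                Or.inr ⟨(by omega : a + b ≤ a + b + m), (by omega : a + b + m < a + b + k)⟩, hval⟩
          have hres := alt_scale ω u
            (fun l : Fin n => if (l:ℕ) < a then (1:ℝ) else if (l:ℕ) < a + b then
              (if (l:ℕ) - a < j then N else s * N) else 1)
            {l : Fin n | (a ≤ (l:ℕ) ∧ (l:ℕ) < a + j) ∨ (a + b ≤ (l:ℕ) ∧ (l:ℕ) < a + b + k)}
            (Finset.univ.filter (fun l : Fin n => a + j ≤ (l:ℕ) ∧ (l:ℕ) < a + b)) u'
            (by
              intro l hl
              simp only [Finset.mem_filter, Finset.mem_univ, true_and, not_and, not_lt] at hl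
              by_cases h1 : (l:ℕ) < a
              · simp [hu', hu, h1]
              · by_cases h2 : (l:ℕ) < a + b
                · have hm : (l:ℕ) - a < j := by omega
                  simp only [hu', hu]
                  rw [if_neg h1, if_neg h1, if_neg h1, if_pos h2, if_pos h2, if_pos h2,
                    if_pos hm]
                  exact hEW _ (hgW _ hm)
                · simp [hu', hu, h1, h2])
            (by
              intro l hl
              simp only [Finset.mem_filter, Finset.mem_univ, true_and] at hl
              have h1 : ¬ (l:ℕ) < a := by omega
              have h2 : (l:ℕ) < a + b := hl.2
              have hm : ¬ ((l:ℕ) - a < j) := by omega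
              simp only [hu', hu]
              rw [if_neg h1, if_neg h1, if_neg h1, if_pos h2, if_pos h2, if_pos h2,
                if_neg hm]
              exact hPspan (hcorrW _))
            (by
              intro l hl
              simp only [Finset.mem_filter, Finset.mem_univ, true_and] at hl
              simp only [Set.mem_setOf_eq, not_or, not_and, not_lt, not_le]
              omega)
          have hprodD : (∏ l : Fin n, (if (l:ℕ) < a then (1:ℝ) else if (l:ℕ) < a + b then
              (if (l:ℕ) - a < j then N else s * N) else 1)) = N ^ b * s ^ (b - j) := by
            have hNb : N ^ j * N ^ (b - j) = N ^ b := by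
              rw [← pow_add]
              congr 1
              omega
            calc (∏ l : Fin n, (if (l:ℕ) < a then (1:ℝ) else if (l:ℕ) < a + b then
                  (if (l:ℕ) - a < j then N else s * N) else 1))
                = ∏ m ∈ Finset.range b, (if m < j then N else s * N) :=
                  prod_block_fun n a b c habc (fun m => if m < j then N else s * N)
              _ = N ^ j * (s * N) ^ (b - j) := prod_range_split b j (by omega) N (s*N)
              _ = (N ^ j * N ^ (b - j)) * s ^ (b - j) := by rw [mul_pow]; ring
              _ = N ^ b * s ^ (b - j) := by rw [hNb]
          rw [hres, hprodD, smul_eq_mul, hmin]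
        · -- case C : a < i, c < k ; use the determinant trick
          have hmin : min (i - a) (b - j) = i - a := by omega
          have hpt : (fun l => E (u l)) = fun l : Fin n =>
              (if (l:ℕ) < a then s * N else if (l:ℕ) < a + b then 1 else N) • u' l := by
            funext l
            by_cases h1 : (l:ℕ) < a
            · simp only [hu, hu']
              rw [if_pos h1, if_pos h1, if_pos h1]
              exact hEU _ (adapted_mem hf (by omega) (by omega))
            · by_cases h2 : (l:ℕ) < a + b
              · simp only [hu, hu']
                rw [if_neg h1, if_neg h1, if_neg h1, if_pos h2, if_pos h2, if_pos h2,
                  one_smul]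
              · simp only [hu, hu']
                rw [if_neg h1, if_neg h1, if_neg h1, if_neg h2, if_neg h2, if_neg h2]
                refine hEW _ (Submodule.mem_sup_right (adapted_mem hh ?_ (by omega)))
                have := l.isLt
                omega
          have h1 : ω (fun l => E (u l)) = ((s*N) ^ a * 1 ^ b * N ^ c) * ω u' := by
            have hms : ω (fun l : Fin n => (if (l:ℕ) < a then s * N else if (l:ℕ) < a + b then 1 else N) • u' l)
                = (∏ l : Fin n, (if (l:ℕ) < a then s * N else if (l:ℕ) < a + b then 1 else N)) • ω u' :=
              alt_map_smul_univ ω _ u'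
            rw [hpt, hms, prod_three_block n a b c habc (s*N) 1 N, smul_eq_mul]
          have h2 : ω (fun l => E (u l)) = (s ^ i * N ^ n) * ω u := hρ u
          have hX : ((s*N) ^ a * N ^ c) ≠ 0 := mul_ne_zero (pow_ne_zero _ hsNne) (pow_ne_zero _ hNne)
          apply mul_left_cancel₀ hX
          have h3 : ((s*N) ^ a * N ^ c) * ω u' = (s ^ i * N ^ n) * ω u := by
            rw [← h2, h1]; ring
          rw [h3, hmin]
          have es : s ^ a * s ^ (i - a) = s ^ i := by rw [← pow_add]; congr 1; omega
          have eN : N ^ a * N ^ c * N ^ b = N ^ n := by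
            rw [← pow_add, ← pow_add]; congr 1; omega
          calc (s ^ i * N ^ n) * ω u = ((s ^ a * s ^ (i-a)) * (N ^ a * N ^ c * N ^ b)) * ω u := by
                rw [es, eN]
            _ = (s*N) ^ a * N ^ c * (N ^ b * s ^ (i - a) * ω u) := by rw [mul_pow]; ring
  -- new wedges nonzero
  have newne : ∀ a b c : ℕ, a + b + c = n → wedge n ω f (fun l => E (g l)) h a b c ≠ 0 := by
    intro a b c habc
    rw [key a b c habc]
    exact mul_ne_zero (mul_ne_zero (pow_ne_zero _ hNne) (pow_ne_zero _ hsne)) (oldne a b c habc)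
  -- final assembly
  intro i' j' k' hi' hj' hk' hsum
  refine ⟨⟨newne _ _ _ (by omega), newne _ _ _ (by omega), newne _ _ _ (by omega),
    newne _ _ _ (by omega), newne _ _ _ (by omega), newne _ _ _ (by omega)⟩, ?_, ?_⟩
  · -- unchanged triple ratios
    intro hneq
    have hne' : ¬ (i' = i ∧ j' = j) := by
      rintro ⟨rfl, rfl⟩
      exact hneq (by have hk'' : k' = k := by omega
                     rw [hk''])
    unfold tripleRatio
    rw [key (i'+1) j' (k'-1) (by omega), key (i'+1) (j'-1) k' (by omega),
      key (i'-1) (j'+1) k' (by omega), key i' (j'+1) (k'-1) (by omega),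
      key i' (j'-1) (k'+1) (by omega), key (i'-1) j' (k'+1) (by omega)]
    have hEsum : min (i - (i'+1)) (j' - j) + min (i - (i'-1)) ((j'+1) - j)
        + min (i - i') ((j'-1) - j)
        = min (i - (i'+1)) ((j'-1) - j) + min (i - i') ((j'+1) - j)
        + min (i - (i'-1)) (j' - j) := by omega
    have hss : s ^ min (i - (i'+1)) (j' - j) * s ^ min (i - (i'-1)) ((j'+1) - j)
        * s ^ min (i - i') ((j'-1) - j)
        = s ^ min (i - (i'+1)) ((j'-1) - j) * s ^ min (i - i') ((j'+1) - j)
        * s ^ min (i - (i'-1)) (j' - j) := by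
      simp only [← pow_add]
      exact congrArg (s ^ ·) hEsum
    have hx : (N ^ j' * s ^ min (i - (i'+1)) (j' - j))
        * (N ^ (j'+1) * s ^ min (i - (i'-1)) ((j'+1) - j))
        * (N ^ (j'-1) * s ^ min (i - i') ((j'-1) - j))
        = 1 * ((N ^ (j'-1) * s ^ min (i - (i'+1)) ((j'-1) - j))
        * (N ^ (j'+1) * s ^ min (i - i') ((j'+1) - j))
        * (N ^ j' * s ^ min (i - (i'-1)) (j' - j))) := by
      linear_combination (N ^ j' * N ^ (j'+1) * N ^ (j'-1)) * hss
    refine Eq.trans (ratio_scale _ _ _ _ _ _ _ _ _ _ _ _ 1 hx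
      (mul_ne_zero (pow_ne_zero _ hNne) (pow_ne_zero _ hsne))
      (mul_ne_zero (pow_ne_zero _ hNne) (pow_ne_zero _ hsne))
      (mul_ne_zero (pow_ne_zero _ hNne) (pow_ne_zero _ hsne))
      (oldne (i'+1) (j'-1) k' (by omega)) (oldne i' (j'+1) (k'-1) (by omega))
      (oldne (i'-1) j' (k'+1) (by omega))) (one_mul _)
  · -- the (i,j,k) triple ratio
    intro heq
    rw [Prod.mk.injEq, Prod.mk.injEq] at heq
    obtain ⟨rfl, rfl, rfl⟩ := heq
    unfold tripleRatio
    rw [key (i'+1) j' (k'-1) (by omega), key (i'+1) (j'-1) k' (by omega),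
      key (i'-1) (j'+1) k' (by omega), key i' (j'+1) (k'-1) (by omega),
      key i' (j'-1) (k'+1) (by omega), key (i'-1) j' (k'+1) (by omega)]
    have hEsum : min (i' - (i'+1)) (j' - j') + min (i' - (i'-1)) ((j'+1) - j')
        + min (i' - i') ((j'-1) - j')
        = 1 + (min (i' - (i'+1)) ((j'-1) - j') + min (i' - i') ((j'+1) - j')
        + min (i' - (i'-1)) (j' - j')) := by omega
    have hss : s ^ min (i' - (i'+1)) (j' - j') * s ^ min (i' - (i'-1)) ((j'+1) - j')
        * s ^ min (i' - i') ((j'-1) - j')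
        = s * (s ^ min (i' - (i'+1)) ((j'-1) - j') * s ^ min (i' - i') ((j'+1) - j')
        * s ^ min (i' - (i'-1)) (j' - j')) := by
      simp only [← pow_add]
      rw [hEsum, pow_add, pow_one]
    have hx : (N ^ j' * s ^ min (i' - (i'+1)) (j' - j'))
        * (N ^ (j'+1) * s ^ min (i' - (i'-1)) ((j'+1) - j'))
        * (N ^ (j'-1) * s ^ min (i' - i') ((j'-1) - j'))
        = s * ((N ^ (j'-1) * s ^ min (i' - (i'+1)) ((j'-1) - j'))
        * (N ^ (j'+1) * s ^ min (i' - i') ((j'+1) - j'))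
        * (N ^ j' * s ^ min (i' - (i'-1)) (j' - j'))) := by
      linear_combination (N ^ j' * N ^ (j'+1) * N ^ (j'-1)) * hss
    exact ratio_scale _ _ _ _ _ _ _ _ _ _ _ _ s hx
      (mul_ne_zero (pow_ne_zero _ hNne) (pow_ne_zero _ hsne))
      (mul_ne_zero (pow_ne_zero _ hNne) (pow_ne_zero _ hsne))
      (mul_ne_zero (pow_ne_zero _ hNne) (pow_ne_zero _ hsne))
      (oldne (i'+1) (j'-1) k' (by omega)) (oldne i' (j'+1) (k'-1) (by omega))
      (oldne (i'-1) j' (k'+1) (by omega))
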